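/- Assume conditions (A2)–(A4). Then the sequence R_n(g) := (χ_g(Φ_0) − χ_g(Φ_n))/√(2 n ln ln n), defined for integers n ≥ 3, converges to zero ℙ_μ-almost surely as n → ∞. -/

import Mathlib

open MeasureTheory Filter Set
open scoped ENNReal Topology NNReal

noncomputable section

variable {X : Type*} [MetricSpace X] [CompleteSpace X] [SecondCountableTopology X]
  [MeasurableSpace X] [BorelSpace X]

/-- Action of a transition kernel family on measures: `ν ↦ ν P_t`. -/
def measAct (P : ℝ → X → Measure X) (t : ℝ) (ν : Measure X) : Measure X :=
  ν.bind (P t)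

/-- Dual action of the semigroup on functions: `f ↦ P_t f`. -/
def funAct (P : ℝ → X → Measure X) (t : ℝ) (f : X → ℝ) (x : X) : ℝ :=
  ∫ y, f y ∂(P t x)

/-- A Borel (probability) measure has a finite first moment. -/
def FiniteFirstMoment (ν : Measure X) : Prop :=
  ∀ x₀ : X, Integrable (fun x => dist x₀ x) ν

/-- The Wasserstein (Kantorovich–Rubinstein) distance `d_W`. -/
def wassDist (μ ν : Measure X) : ℝ :=
  sSup {r | ∃ f : X → ℝ, LipschitzWith 1 f ∧ r = |(∫ x, f x ∂μ) - ∫ x, f x ∂ν|}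

/-- A Markov semigroup `{P_t}_{t ≥ 0}` of probability kernels on `X`. -/
structure IsMarkovSemigroup (P : ℝ → X → Measure X) : Prop where
  prob : ∀ t, 0 ≤ t → ∀ x, IsProbabilityMeasure (P t x)
  jointMeas : ∀ A : Set X, MeasurableSet A → Measurable fun p : ℝ × X => P p.1 p.2 A
  init : ∀ x, P 0 x = Measure.dirac x
  chapman : ∀ s t, 0 ≤ s → 0 ≤ t → ∀ x, P (s + t) x = (P s x).bind (P t)

/-- Condition (A1): stochastic continuity of the semigroup. -/
def CondA1 (P : ℝ → X → Measure X) : Prop :=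
  ∀ f : X → ℝ, Continuous f → (∃ C, ∀ x, |f x| ≤ C) →
    ∀ x : X, Tendsto (fun t => funAct P t f x) (𝓝[>] (0 : ℝ)) (𝓝 (f x))

/-- Condition (A2): the Feller property. -/
def CondA2 (P : ℝ → X → Measure X) : Prop :=
  ∀ f : X → ℝ, Continuous f → (∃ C, ∀ x, |f x| ≤ C) → ∀ t, 0 ≤ t →
    Continuous (funAct P t f) ∧ ∃ C, ∀ x, |funAct P t f x| ≤ C

/-- Condition (A3): preservation of finite first moments and exponential
contractivity in the Wasserstein distance, with rate `γ`. -/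
def CondA3 (P : ℝ → X → Measure X) (γ : ℝ) : Prop :=
  (∀ ν : Measure X, IsProbabilityMeasure ν → FiniteFirstMoment ν →
    ∀ t, 0 < t → FiniteFirstMoment (measAct P t ν)) ∧
  0 < γ ∧
  ∀ t, 0 ≤ t → ∀ x y : X,
    wassDist (P t x) (P t y) ≤ Real.exp (-γ * t) * dist x y

/-- Condition (A4): a uniform-in-time moment bound of order `ζ > 2` for the initial
distribution `μ`, along the semigroup. -/
def CondA4 (P : ℝ → X → Measure X) (μ : Measure X) (x₀ : X) (ζ : ℝ) : Prop :=
  2 < ζ ∧ ∃ M : ℝ, ∀ t, 0 ≤ t →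
    (∫⁻ x, ENNReal.ofReal (dist x₀ x ^ ζ) ∂(measAct P t μ)) ≤ ENNReal.ofReal M

variable {Ω : Type*} [MeasurableSpace Ω]

/-- The natural filtration of the process `Φ`. -/
def natFiltration (Φ : ℝ → Ω → X) (s : ℝ) : MeasurableSpace Ω :=
  ⨆ u ∈ Set.Icc (0 : ℝ) s, MeasurableSpace.comap (Φ u) inferInstance

/-- A (progressively measurable) time-homogeneous Markov process with state space `X`,
transition semigroup `P` and initial distribution `μ`, realized on `(Ω, ℙ)`. -/
structure IsMarkovProcess (P : ℝ → X → Measure X) (Φ : ℝ → Ω → X)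
    (ℙ : Measure Ω) (μ : Measure X) : Prop where
  jointMeas : Measurable fun p : ℝ × Ω => Φ p.1 p.2
  init : ℙ.map (Φ 0) = μ
  law : ∀ t, 0 ≤ t → ℙ.map (Φ t) = measAct P t μ
  markov : ∀ f : X → ℝ, Measurable f → (∃ C, ∀ x, |f x| ≤ C) →
    ∀ s t : ℝ, 0 ≤ s → 0 ≤ t →
      (fun ω => funAct P t f (Φ s ω)) =ᵐ[ℙ]
        ℙ[(fun ω => f (Φ (s + t) ω)) | natFiltration Φ s]

/-- A Markov process together with a measurable family of laws `{ℙ_x}_{x ∈ X}`,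
with `ℙ_x(Φ_0 = x) = 1`. -/
structure IsMarkovFamily (P : ℝ → X → Measure X) (Φ : ℝ → Ω → X)
    (ℙ : X → Measure Ω) : Prop where
  prob : ∀ x, IsProbabilityMeasure (ℙ x)
  jointMeas : Measurable fun p : ℝ × Ω => Φ p.1 p.2
  measFam : ∀ s : Set Ω, MeasurableSet s → Measurable fun x => ℙ x s
  start : ∀ x, (ℙ x) {ω | Φ 0 ω = x} = 1
  law : ∀ x, ∀ t, 0 ≤ t → (ℙ x).map (Φ t) = P t x
  markov : ∀ x : X, ∀ f : X → ℝ, Measurable f → (∃ C, ∀ z, |f z| ≤ C) →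
    ∀ s t : ℝ, 0 ≤ s → 0 ≤ t →
      (fun ω => funAct P t f (Φ s ω)) =ᵐ[ℙ x]
        (ℙ x)[(fun ω => f (Φ (s + t) ω)) | natFiltration Φ s]

/-- The corrector function `χ_g(x) = ∫_0^∞ (P_t g)(x) dt`. -/
def corrector (P : ℝ → X → Measure X) (g : X → ℝ) (x : X) : ℝ :=
  ∫ t in Set.Ioi (0 : ℝ), funAct P t g x

/-- The additive functional `I_t(g) = ∫_0^t g(Φ_s) ds`. -/
def addFun (g : X → ℝ) (Φ : ℝ → Ω → X) (t : ℝ) (ω : Ω) : ℝ :=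
  ∫ s in (0 : ℝ)..t, g (Φ s ω)

/-- The martingale part `M_t(g) = χ_g(Φ_t) - χ_g(Φ_0) + I_t(g)`. -/
def mart (P : ℝ → X → Measure X) (g : X → ℝ) (Φ : ℝ → Ω → X) (t : ℝ) (ω : Ω) : ℝ :=
  corrector P g (Φ t ω) - corrector P g (Φ 0 ω) + addFun g Φ t ω

/-- The martingale increments `Z_n(g) = M_n(g) - M_{n-1}(g)`. -/
def incr (P : ℝ → X → Measure X) (g : X → ℝ) (Φ : ℝ → Ω → X) (n : ℕ) (ω : Ω) : ℝ :=
  mart P g Φ (n : ℝ) ω - mart P g Φ ((n : ℝ) - 1) ω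

/-- Truncation `a ∧ p` for `p ∈ ℕ ∪ {∞}`, with the convention `a ∧ ∞ = a`. -/
def truncMin (a : ℝ) (p : ℕ∞) : ℝ :=
  if p = ⊤ then a else min a (p.toNat : ℝ)

section Aux
set_option linter.unusedSectionVars false

variable {X : Type*} [MetricSpace X] [CompleteSpace X] [SecondCountableTopology X]
  [MeasurableSpace X] [BorelSpace X]

lemma integrable_of_bound (ν : Measure X) [IsFiniteMeasure ν] {f : X → ℝ}
    (hf : AEStronglyMeasurable f ν) (C : ℝ) (hb : ∀ x, |f x| ≤ C) : Integrable f ν :=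
  Integrable.mono' (integrable_const C) hf
    (Filter.Eventually.of_forall fun x => by simpa [Real.norm_eq_abs] using hb x)

lemma measurable_P {P : ℝ → X → Measure X} (hP : IsMarkovSemigroup P) (t : ℝ) :
    Measurable (P t) :=
  Measure.measurable_of_measurable_coe _ fun A hA =>
    (hP.jointMeas A hA).comp (measurable_const.prodMk measurable_id)

lemma isProb_bind (ν : Measure X) [IsProbabilityMeasure ν] {κ : X → Measure X}
    (hκ : Measurable κ) (hκp : ∀ x, IsProbabilityMeasure (κ x)) :
    IsProbabilityMeasure (ν.bind κ) := by
  constructor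
  rw [Measure.bind_apply MeasurableSet.univ hκ.aemeasurable]
  simp [(hκp _).measure_univ]

lemma integral_bind_eq (ν : Measure X) [IsProbabilityMeasure ν] {κ : X → Measure X}
    (hκ : Measurable κ) (hκp : ∀ x, IsProbabilityMeasure (κ x))
    {f : X → ℝ} (hf : Measurable f) {C : ℝ} (hb : ∀ x, |f x| ≤ C) :
    ∫ y, f y ∂(ν.bind κ) = ∫ x, ∫ y, f y ∂(κ x) ∂ν := by
  have hC : 0 ≤ |C| := abs_nonneg C
  have hb' : ∀ x, |f x| ≤ |C| := fun x => (hb x).trans (le_abs_self C)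
  have hbind : IsProbabilityMeasure (ν.bind κ) := isProb_bind ν hκ hκp
  set a : X → ℝ≥0∞ := fun x => ∫⁻ y, ENNReal.ofReal (f y) ∂(κ x) with ha_def
  set b : X → ℝ≥0∞ := fun x => ∫⁻ y, ENNReal.ofReal (-f y) ∂(κ x) with hb_def
  have hfm : Measurable fun y => ENNReal.ofReal (f y) := ENNReal.measurable_ofReal.comp hf
  have hfm' : Measurable fun y => ENNReal.ofReal (-f y) :=
    ENNReal.measurable_ofReal.comp hf.neg
  have hma : Measurable a := (Measure.measurable_lintegral hfm).comp hκ
  have hmb : Measurable b := (Measure.measurable_lintegral hfm').comp hκ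
  have hale : ∀ x, a x ≤ ENNReal.ofReal |C| := by
    intro x
    calc a x ≤ ∫⁻ _, ENNReal.ofReal |C| ∂(κ x) :=
          lintegral_mono fun y => ENNReal.ofReal_le_ofReal ((le_abs_self _).trans (hb' y))
      _ = ENNReal.ofReal |C| := by
          haveI := hκp x; simp [lintegral_const, (hκp x).measure_univ]
  have hble : ∀ x, b x ≤ ENNReal.ofReal |C| := by
    intro x
    calc b x ≤ ∫⁻ _, ENNReal.ofReal |C| ∂(κ x) :=
          lintegral_mono fun y => ENNReal.ofReal_le_ofReal
            ((le_abs_self _).trans (by simpa [abs_neg] using hb' y))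
      _ = ENNReal.ofReal |C| := by
          haveI := hκp x; simp [lintegral_const, (hκp x).measure_univ]
  have halt : ∀ x, a x < ⊤ := fun x => lt_of_le_of_lt (hale x) ENNReal.ofReal_lt_top
  have hblt : ∀ x, b x < ⊤ := fun x => lt_of_le_of_lt (hble x) ENNReal.ofReal_lt_top
  have hint_bind : Integrable f (ν.bind κ) :=
    integrable_of_bound _ hf.aestronglyMeasurable _ hb'
  have hint_each : ∀ x, Integrable f (κ x) := fun x => by
    haveI := hκp x; exact integrable_of_bound _ hf.aestronglyMeasurable _ hb'
  -- rewrite inner integrals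
  have hinner : ∀ x, ∫ y, f y ∂(κ x) = (a x).toReal - (b x).toReal := fun x =>
    integral_eq_lintegral_pos_part_sub_lintegral_neg_part (hint_each x)
  have houter : ∫ y, f y ∂(ν.bind κ)
      = (∫⁻ y, ENNReal.ofReal (f y) ∂(ν.bind κ)).toReal
        - (∫⁻ y, ENNReal.ofReal (-f y) ∂(ν.bind κ)).toReal :=
    integral_eq_lintegral_pos_part_sub_lintegral_neg_part hint_bind
  have hla : ∫⁻ y, ENNReal.ofReal (f y) ∂(ν.bind κ) = ∫⁻ x, a x ∂ν :=
    Measure.lintegral_bind hκ.aemeasurable hfm.aemeasurable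
  have hlb : ∫⁻ y, ENNReal.ofReal (-f y) ∂(ν.bind κ) = ∫⁻ x, b x ∂ν :=
    Measure.lintegral_bind hκ.aemeasurable hfm'.aemeasurable
  have hina : Integrable (fun x => (a x).toReal) ν := by
    refine integrable_of_bound _ (hma.ennreal_toReal).aestronglyMeasurable |C| fun x => ?_
    rw [abs_of_nonneg ENNReal.toReal_nonneg]
    exact ENNReal.toReal_le_of_le_ofReal hC (hale x)
  have hinb : Integrable (fun x => (b x).toReal) ν := by
    refine integrable_of_bound _ (hmb.ennreal_toReal).aestronglyMeasurable |C| fun x => ?_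
    rw [abs_of_nonneg ENNReal.toReal_nonneg]
    exact ENNReal.toReal_le_of_le_ofReal hC (hble x)
  have hia : ∫ x, (a x).toReal ∂ν = (∫⁻ x, a x ∂ν).toReal :=
    integral_toReal hma.aemeasurable (Filter.Eventually.of_forall halt)
  have hib : ∫ x, (b x).toReal ∂ν = (∫⁻ x, b x ∂ν).toReal :=
    integral_toReal hmb.aemeasurable (Filter.Eventually.of_forall hblt)
  calc ∫ y, f y ∂(ν.bind κ)
      = (∫⁻ x, a x ∂ν).toReal - (∫⁻ x, b x ∂ν).toReal := by rw [houter, hla, hlb]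
    _ = ∫ x, (a x).toReal ∂ν - ∫ x, (b x).toReal ∂ν := by rw [hia, hib]
    _ = ∫ x, ((a x).toReal - (b x).toReal) ∂ν := (integral_sub hina hinb).symm
    _ = ∫ x, ∫ y, f y ∂(κ x) ∂ν := by
        refine integral_congr_ae (Filter.Eventually.of_forall fun x => ?_)
        exact (hinner x).symm

end Aux
section Aux2
set_option linter.unusedSectionVars false

variable {X : Type*} [MetricSpace X] [CompleteSpace X] [SecondCountableTopology X]
  [MeasurableSpace X] [BorelSpace X]

lemma lipschitz_integrable {ν : Measure X} [IsProbabilityMeasure ν]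
    (hν : FiniteFirstMoment ν) {f : X → ℝ} {L : ℝ≥0} (hf : LipschitzWith L f) (x₀ : X) :
    Integrable f ν := by
  refine Integrable.mono' (((hν x₀).const_mul L).add (integrable_const |f x₀|))
    hf.continuous.aestronglyMeasurable (Filter.Eventually.of_forall fun y => ?_)
  have h1 : |f y - f x₀| ≤ (L : ℝ) * dist y x₀ := by
    simpa [Real.dist_eq] using hf.dist_le_mul y x₀
  calc ‖f y‖ = |f y - f x₀ + f x₀| := by rw [Real.norm_eq_abs]; ring_nf
    _ ≤ |f y - f x₀| + |f x₀| := abs_add_le _ _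
    _ ≤ (L : ℝ) * dist x₀ y + |f x₀| := by rw [dist_comm x₀ y]; linarith

lemma abs_integral_sub_le_wassDist {μ ν : Measure X} [IsProbabilityMeasure μ]
    [IsProbabilityMeasure ν] (hμ : FiniteFirstMoment μ) (hν : FiniteFirstMoment ν) (x₀ : X)
    {f : X → ℝ} (hf : LipschitzWith 1 f) :
    |(∫ x, f x ∂μ) - ∫ x, f x ∂ν| ≤ wassDist μ ν := by
  have key : ∀ (h : X → ℝ), LipschitzWith 1 h →
      |(∫ x, h x ∂μ) - ∫ x, h x ∂ν| ≤ (∫ x, dist x₀ x ∂μ) + ∫ x, dist x₀ x ∂ν := by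
    intro h hLh
    have hiμ : Integrable h μ := lipschitz_integrable hμ hLh x₀
    have hiν : Integrable h ν := lipschitz_integrable hν hLh x₀
    have habs : ∀ y : X, |h y - h x₀| ≤ dist x₀ y := fun y => by
      have := hLh.dist_le_mul y x₀
      rw [dist_comm x₀ y]; simpa [Real.dist_eq] using this
    have hμc : ∫ x, h x ∂μ - h x₀ = ∫ x, (h x - h x₀) ∂μ := by
      rw [integral_sub hiμ (integrable_const _), integral_const]; simp
    have hνc : ∫ x, h x ∂ν - h x₀ = ∫ x, (h x - h x₀) ∂ν := by
      rw [integral_sub hiν (integrable_const _), integral_const]; simp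
    have hbμ : |∫ x, (h x - h x₀) ∂μ| ≤ ∫ x, dist x₀ x ∂μ := by
      calc |∫ x, (h x - h x₀) ∂μ| ≤ ∫ x, |h x - h x₀| ∂μ := by
            simpa [Real.norm_eq_abs] using
              norm_integral_le_integral_norm (μ := μ) (f := fun x => h x - h x₀)
        _ ≤ ∫ x, dist x₀ x ∂μ :=
            integral_mono (hiμ.sub (integrable_const _)).abs (hμ x₀) fun y => habs y
    have hbν : |∫ x, (h x - h x₀) ∂ν| ≤ ∫ x, dist x₀ x ∂ν := by
      calc |∫ x, (h x - h x₀) ∂ν| ≤ ∫ x, |h x - h x₀| ∂ν := by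
            simpa [Real.norm_eq_abs] using
              norm_integral_le_integral_norm (μ := ν) (f := fun x => h x - h x₀)
        _ ≤ ∫ x, dist x₀ x ∂ν :=
            integral_mono (hiν.sub (integrable_const _)).abs (hν x₀) fun y => habs y
    calc |(∫ x, h x ∂μ) - ∫ x, h x ∂ν|
        = |(∫ x, (h x - h x₀) ∂μ) - ∫ x, (h x - h x₀) ∂ν| := by rw [← hμc, ← hνc]; ring_nf
      _ ≤ |∫ x, (h x - h x₀) ∂μ| + |∫ x, (h x - h x₀) ∂ν| := abs_sub _ _
      _ ≤ (∫ x, dist x₀ x ∂μ) + ∫ x, dist x₀ x ∂ν := add_le_add hbμ hbν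
  have hBdd : BddAbove {r | ∃ f : X → ℝ, LipschitzWith 1 f ∧
      r = |(∫ x, f x ∂μ) - ∫ x, f x ∂ν|} := by
    refine ⟨(∫ x, dist x₀ x ∂μ) + ∫ x, dist x₀ x ∂ν, ?_⟩
    rintro r ⟨h, hLh, rfl⟩
    exact key h hLh
  exact le_csSup hBdd ⟨f, hf, rfl⟩

lemma ffm_dirac (x : X) : FiniteFirstMoment (Measure.dirac x) := by
  intro x₀
  have hm : Measurable fun a : X => dist x₀ a := measurable_const.dist measurable_id
  refine ⟨hm.aestronglyMeasurable, ?_⟩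
  rw [HasFiniteIntegral, lintegral_dirac' _ hm.enorm]
  exact enorm_lt_top

lemma ffm_P {P : ℝ → X → Measure X} (hP : IsMarkovSemigroup P) {γ : ℝ} (hA3 : CondA3 P γ)
    (t : ℝ) (ht : 0 ≤ t) (x : X) : FiniteFirstMoment (P t x) := by
  rcases eq_or_lt_of_le ht with h | h
  · rw [← h, hP.init]; exact ffm_dirac x
  · have h2 := hA3.1 (Measure.dirac x) inferInstance (ffm_dirac x) t h
    rwa [measAct, Measure.dirac_bind (measurable_P hP t)] at h2

lemma funAct_dist_le {P : ℝ → X → Measure X} (hP : IsMarkovSemigroup P) {γ : ℝ}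
    (hA3 : CondA3 P γ) {g : X → ℝ} {K : ℝ≥0} (hLip : LipschitzWith K g)
    (t : ℝ) (ht : 0 ≤ t) (x y : X) :
    |funAct P t g x - funAct P t g y| ≤ (K : ℝ) * Real.exp (-γ * t) * dist x y := by
  haveI := hP.prob t ht x
  haveI := hP.prob t ht y
  rcases eq_or_ne K 0 with hK | hK
  · have hconst : ∀ a b : X, g a = g b := fun a b => by
      have h2 := hLip.dist_le_mul a b
      rw [hK] at h2
      simpa [dist_le_zero] using h2
    have heq : funAct P t g x = funAct P t g y := by
      unfold funAct
      have hx : (fun z => g z) = fun _ : X => g x := funext fun z => hconst z x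
      rw [hx, integral_const, integral_const]
      simp
    rw [heq, sub_self, abs_zero]
    positivity
  · set f : X → ℝ := fun z => (K : ℝ)⁻¹ * g z with hf_def
    have hKpos : (0 : ℝ) < K := by exact_mod_cast (show (0:ℝ≥0) ≤ K from zero_le).lt_of_ne (Ne.symm hK)
    have hf1 : LipschitzWith 1 f := by
      refine LipschitzWith.of_dist_le_mul fun a b => ?_
      have h2 := hLip.dist_le_mul a b
      rw [Real.dist_eq] at h2 ⊢
      simp only [NNReal.coe_one, one_mul]
      have : |f a - f b| = (K : ℝ)⁻¹ * |g a - g b| := by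
        rw [hf_def]; rw [← mul_sub, abs_mul, abs_of_nonneg (by positivity : (0:ℝ) ≤ (K:ℝ)⁻¹)]
      rw [this]
      calc (K : ℝ)⁻¹ * |g a - g b| ≤ (K : ℝ)⁻¹ * ((K : ℝ) * dist a b) := by
            apply mul_le_mul_of_nonneg_left h2; positivity
        _ = dist a b := by field_simp
      
    have h1 : |(∫ z, f z ∂(P t x)) - ∫ z, f z ∂(P t y)| ≤ wassDist (P t x) (P t y) :=
      abs_integral_sub_le_wassDist (ffm_P hP hA3 t ht x) (ffm_P hP hA3 t ht y) x hf1
    have h2 : wassDist (P t x) (P t y) ≤ Real.exp (-γ * t) * dist x y := hA3.2.2 t ht x y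
    have h3 : ∀ w : X, ∫ z, f z ∂(P t w) = (K : ℝ)⁻¹ * funAct P t g w := fun w =>
      integral_const_mul _ _
    have h4 : funAct P t g x - funAct P t g y
        = (K : ℝ) * ((∫ z, f z ∂(P t x)) - ∫ z, f z ∂(P t y)) := by
      rw [h3, h3, ← mul_sub, ← mul_assoc]
      field_simp
    rw [h4, abs_mul, abs_of_nonneg (le_of_lt hKpos), mul_assoc]
    exact mul_le_mul_of_nonneg_left (h1.trans h2) (le_of_lt hKpos)

lemma funAct_abs_le {P : ℝ → X → Measure X} (hP : IsMarkovSemigroup P)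
    {g : X → ℝ} {C : ℝ} (hb : ∀ z, |g z| ≤ C) (t : ℝ) (ht : 0 ≤ t) (x : X) :
    |funAct P t g x| ≤ C := by
  haveI := hP.prob t ht x
  have := norm_integral_le_of_norm_le_const (μ := P t x) (f := g) (C := C)
    (Filter.Eventually.of_forall fun y => by simpa [Real.norm_eq_abs] using hb y)
  simpa [funAct, Real.norm_eq_abs, measure_univ] using this

end Aux2
section Aux3
set_option linter.unusedSectionVars false
set_option maxHeartbeats 1000000

variable {X : Type*} [MetricSpace X] [CompleteSpace X] [SecondCountableTopology X]
  [MeasurableSpace X] [BorelSpace X]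

lemma ffm_invariant {P : ℝ → X → Measure X} (hP : IsMarkovSemigroup P) {γ : ℝ}
    (hA2 : CondA2 P) (hA3 : CondA3 P γ) (μstar : Measure X) [IsProbabilityMeasure μstar]
    (hinv : ∀ t, 0 ≤ t → measAct P t μstar = μstar) :
    FiniteFirstMoment μstar := by
  intro x₀
  have hγ : 0 < γ := hA3.2.1
  set θ : ℝ := Real.exp (-γ) with hθ_def
  have hθ0 : 0 < θ := Real.exp_pos _
  have hθ1 : θ < 1 := by rw [hθ_def, Real.exp_lt_one_iff]; linarith
  have hffm1 := ffm_P hP hA3 1 zero_le_one x₀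
  have hcint : Integrable (fun y => dist x₀ y) (P 1 x₀) := hffm1 x₀
  haveI : IsProbabilityMeasure (P 1 x₀) := hP.prob 1 zero_le_one x₀
  set c : ℝ := ∫ y, dist x₀ y ∂(P 1 x₀) with hc_def
  have hc0 : 0 ≤ c := integral_nonneg fun y => dist_nonneg
  set trunc : ℝ → X → ℝ := fun R y => min (dist x₀ y) R with htrunc_def
  have htc : ∀ R, Continuous (trunc R) :=
    fun R => (continuous_const.dist continuous_id).min continuous_const
  have htlip : ∀ R, LipschitzWith 1 (trunc R) :=
    fun R => (LipschitzWith.dist_right x₀).min_const R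
  have htabs : ∀ R, 0 ≤ R → ∀ y, |trunc R y| ≤ R := fun R hR y => by
    rw [abs_of_nonneg (le_min dist_nonneg hR)]
    exact min_le_right _ _
  have htint : ∀ (R : ℝ), 0 ≤ R → ∀ (ν : Measure X), IsProbabilityMeasure ν →
      Integrable (trunc R) ν := fun R hR ν hν => by
    haveI := hν
    exact integrable_of_bound ν (htc R).aestronglyMeasurable R (htabs R hR)
  set u : ℝ → ℝ := fun R => ∫ y, trunc R y ∂μstar with hu_def
  -- Step 2: the key recursive inequality
  have step2 : ∀ R, 0 ≤ R → u R ≤ c + θ * u (R / θ) := by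
    intro R hR
    have hRθ : 0 ≤ R / θ := div_nonneg hR hθ0.le
    have hbind : u R = ∫ x, funAct P 1 (trunc R) x ∂μstar := by
      have h1 : u R = ∫ y, trunc R y ∂(measAct P 1 μstar) := by rw [hinv 1 zero_le_one]
      rw [h1, measAct, integral_bind_eq μstar (measurable_P hP 1) (hP.prob 1 zero_le_one)
        (htc R).measurable (htabs R hR)]
      rfl
    have hfa_cont := hA2 (trunc R) (htc R) ⟨R, htabs R hR⟩ 1 zero_le_one
    have hpt : ∀ x, funAct P 1 (trunc R) x ≤ c + θ * trunc (R / θ) x := by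
      intro x
      have hAle : funAct P 1 (trunc R) x ≤ R :=
        le_of_abs_le (funAct_abs_le hP (htabs R hR) 1 zero_le_one x)
      have hBle : funAct P 1 (trunc R) x ≤ c + θ * dist x₀ x := by
        have hdd := funAct_dist_le hP hA3 (htlip R) 1 zero_le_one x x₀
        have hx₀le : funAct P 1 (trunc R) x₀ ≤ c := by
          refine integral_mono (htint R hR _ (hP.prob 1 zero_le_one x₀)) hcint ?_
          exact fun y => min_le_left _ _
        have h3 : funAct P 1 (trunc R) x
            ≤ funAct P 1 (trunc R) x₀ + |funAct P 1 (trunc R) x - funAct P 1 (trunc R) x₀| := by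
          have := le_abs_self (funAct P 1 (trunc R) x - funAct P 1 (trunc R) x₀)
          linarith
        have h4 : |funAct P 1 (trunc R) x - funAct P 1 (trunc R) x₀| ≤ θ * dist x₀ x := by
          have h5 : ((1 : ℝ≥0) : ℝ) * Real.exp (-γ * 1) * dist x x₀ = θ * dist x₀ x := by
            rw [dist_comm x x₀]; simp [hθ_def]
          calc |funAct P 1 (trunc R) x - funAct P 1 (trunc R) x₀|
              ≤ ((1 : ℝ≥0) : ℝ) * Real.exp (-γ * 1) * dist x x₀ := hdd
            _ = θ * dist x₀ x := h5
        linarith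
      rcases le_or_gt (dist x₀ x) (R / θ) with hcase | hcase
      · have : trunc (R / θ) x = dist x₀ x := min_eq_left hcase
        rw [this]; exact hBle
      · have h6 : trunc (R / θ) x = R / θ := min_eq_right hcase.le
        rw [h6, mul_div_cancel₀ _ (ne_of_gt hθ0)]
        linarith
    rw [hbind]
    calc ∫ x, funAct P 1 (trunc R) x ∂μstar
        ≤ ∫ x, (c + θ * trunc (R / θ) x) ∂μstar := by
          refine integral_mono ?_ ?_ hpt
          · obtain ⟨C, hC⟩ := hfa_cont.2
            exact integrable_of_bound μstar hfa_cont.1.aestronglyMeasurable C hC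
          · exact (integrable_const c).add ((htint _ hRθ μstar inferInstance).const_mul θ)
      _ = c + θ * u (R / θ) := by
          rw [integral_add (integrable_const c) ((htint _ hRθ μstar inferInstance).const_mul θ),
            integral_const, integral_const_mul]
          simp [hu_def]
  -- Step 3: iterate
  have step3 : ∀ (n : ℕ) (R : ℝ), 0 ≤ R →
      u R ≤ c * (∑ k ∈ Finset.range n, θ ^ k) + θ ^ n * u (R / θ ^ n) := by
    intro n
    induction n with
    | zero => intro R hR; simp
    | succ n ih =>
      intro R hR
      have h1 := ih R hR
      have hRn : 0 ≤ R / θ ^ n := div_nonneg hR (pow_nonneg hθ0.le n)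
      have h2 := step2 (R / θ ^ n) hRn
      have h3 : R / θ ^ n / θ = R / θ ^ (n + 1) := by
        rw [div_div, ← pow_succ]
      rw [h3] at h2
      have hθn : (0:ℝ) ≤ θ ^ n := pow_nonneg hθ0.le n
      have h4 : θ ^ n * u (R / θ ^ n) ≤ θ ^ n * (c + θ * u (R / θ ^ (n + 1))) :=
        mul_le_mul_of_nonneg_left h2 hθn
      rw [Finset.sum_range_succ]
      have h5 : θ ^ n * (c + θ * u (R / θ ^ (n + 1)))
          = c * θ ^ n + θ ^ (n + 1) * u (R / θ ^ (n + 1)) := by ring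
      rw [h5] at h4
      linarith [h1, h4]
  -- Step 4: the error term tends to zero
  have step4 : ∀ R : ℝ, 0 ≤ R →
      Tendsto (fun n : ℕ => θ ^ n * u (R / θ ^ n)) atTop (𝓝 0) := by
    intro R hR
    have hrw : ∀ n : ℕ, θ ^ n * u (R / θ ^ n) = ∫ y, θ ^ n * trunc (R / θ ^ n) y ∂μstar := by
      intro n; rw [hu_def]; exact (integral_const_mul _ _).symm
    simp_rw [hrw]
    have h0 : (0 : ℝ) = ∫ _ : X, (0:ℝ) ∂μstar := by simp
    rw [h0]
    refine tendsto_integral_of_dominated_convergence (fun _ => R) ?_ (integrable_const R) ?_ ?_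
    · intro n
      exact (continuous_const.mul (htc _)).aestronglyMeasurable
    · intro n
      refine Filter.Eventually.of_forall fun y => ?_
      have hθn : (0:ℝ) < θ ^ n := pow_pos hθ0 n
      have h1 : |θ ^ n * trunc (R / θ ^ n) y| = θ ^ n * trunc (R / θ ^ n) y := by
        refine abs_of_nonneg (mul_nonneg hθn.le (le_min dist_nonneg (div_nonneg hR hθn.le)))
      rw [Real.norm_eq_abs, h1]
      calc θ ^ n * trunc (R / θ ^ n) y ≤ θ ^ n * (R / θ ^ n) :=
            mul_le_mul_of_nonneg_left (min_le_right _ _) hθn.le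
        _ = R := by field_simp
    · refine Filter.Eventually.of_forall fun y => ?_
      have hub : ∀ n : ℕ, θ ^ n * trunc (R / θ ^ n) y ≤ θ ^ n * dist x₀ y := fun n =>
        mul_le_mul_of_nonneg_left (min_le_left _ _) (pow_nonneg hθ0.le n)
      have hlb : ∀ n : ℕ, 0 ≤ θ ^ n * trunc (R / θ ^ n) y := fun n =>
        mul_nonneg (pow_nonneg hθ0.le n)
          (le_min dist_nonneg (div_nonneg hR (pow_nonneg hθ0.le n)))
      have hto : Tendsto (fun n : ℕ => θ ^ n * dist x₀ y) atTop (𝓝 0) := by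
        have := (tendsto_pow_atTop_nhds_zero_of_lt_one hθ0.le hθ1).mul_const (dist x₀ y)
        simpa using this
      exact squeeze_zero hlb hub hto
  -- Step 5: uniform bound on u
  have step5 : ∀ R : ℝ, 0 ≤ R → u R ≤ c * (1 - θ)⁻¹ := by
    intro R hR
    have hgeom : Tendsto (fun n : ℕ => c * ∑ k ∈ Finset.range n, θ ^ k) atTop
        (𝓝 (c * (1 - θ)⁻¹)) :=
      ((hasSum_geometric_of_lt_one hθ0.le hθ1).tendsto_sum_nat).const_mul c
    have hlim : Tendsto (fun n : ℕ => c * (∑ k ∈ Finset.range n, θ ^ k)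
        + θ ^ n * u (R / θ ^ n)) atTop (𝓝 (c * (1 - θ)⁻¹ + 0)) :=
      hgeom.add (step4 R hR)
    rw [add_zero] at hlim
    exact ge_of_tendsto' hlim fun n => step3 n R hR
  -- conclude integrability
  have hmdist : Measurable fun y : X => dist x₀ y := measurable_const.dist measurable_id
  have hsup : ∀ y : X, (⨆ n : ℕ, ENNReal.ofReal (trunc (n : ℝ) y))
      = ENNReal.ofReal (dist x₀ y) := by
    intro y
    apply le_antisymm
    · exact iSup_le fun n => ENNReal.ofReal_le_ofReal (min_le_left _ _)
    · refine le_iSup_of_le ⌈dist x₀ y⌉₊ (le_of_eq ?_)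
      rw [htrunc_def]
      congr 1
      exact (min_eq_left (Nat.le_ceil _)).symm
  have hlint : ∫⁻ y, ENNReal.ofReal (dist x₀ y) ∂μstar ≤ ENNReal.ofReal (c * (1 - θ)⁻¹) := by
    have hmono : Monotone fun n : ℕ => fun y : X => ENNReal.ofReal (trunc (n : ℝ) y) := by
      intro i j hij
      intro y
      exact ENNReal.ofReal_le_ofReal (min_le_min le_rfl (Nat.cast_le.mpr hij))
    have h1 : ∫⁻ y, ENNReal.ofReal (dist x₀ y) ∂μstar
        = ⨆ n : ℕ, ∫⁻ y, ENNReal.ofReal (trunc (n : ℝ) y) ∂μstar := by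
      calc ∫⁻ y, ENNReal.ofReal (dist x₀ y) ∂μstar
          = ∫⁻ y, ⨆ n : ℕ, ENNReal.ofReal (trunc (n : ℝ) y) ∂μstar :=
            lintegral_congr fun y => (hsup y).symm
        _ = ⨆ n : ℕ, ∫⁻ y, ENNReal.ofReal (trunc (n : ℝ) y) ∂μstar :=
            lintegral_iSup (fun n => ENNReal.measurable_ofReal.comp (htc _).measurable) hmono
    rw [h1]
    refine iSup_le fun n => ?_
    have h2 : ∫⁻ y, ENNReal.ofReal (trunc (n : ℝ) y) ∂μstar = ENNReal.ofReal (u (n : ℝ)) := by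
      rw [hu_def]
      exact (ofReal_integral_eq_lintegral_ofReal (htint _ (Nat.cast_nonneg n) μstar inferInstance)
        (Filter.Eventually.of_forall fun y => le_min dist_nonneg (Nat.cast_nonneg n))).symm
    rw [h2]
    exact ENNReal.ofReal_le_ofReal (step5 _ (Nat.cast_nonneg n))
  refine ⟨hmdist.aestronglyMeasurable, ?_⟩
  rw [HasFiniteIntegral]
  have h3 : ∫⁻ y, ‖dist x₀ y‖ₑ ∂μstar = ∫⁻ y, ENNReal.ofReal (dist x₀ y) ∂μstar :=
    lintegral_congr fun y => Real.enorm_eq_ofReal dist_nonneg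
  rw [h3]
  exact lt_of_le_of_lt hlint ENNReal.ofReal_lt_top

end Aux3
section Aux4
set_option linter.unusedSectionVars false
set_option maxHeartbeats 1000000

variable {X : Type*} [MetricSpace X] [CompleteSpace X] [SecondCountableTopology X]
  [MeasurableSpace X] [BorelSpace X]

lemma funAct_mean_zero {P : ℝ → X → Measure X} (hP : IsMarkovSemigroup P)
    (μstar : Measure X) [IsProbabilityMeasure μstar]
    (hinv : ∀ t, 0 ≤ t → measAct P t μstar = μstar)
    {g : X → ℝ} (hg : Measurable g) {C : ℝ} (hb : ∀ z, |g z| ≤ C)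
    (hmean : ∫ x, g x ∂μstar = 0) (t : ℝ) (ht : 0 ≤ t) :
    ∫ y, funAct P t g y ∂μstar = 0 := by
  have h1 : ∫ y, funAct P t g y ∂μstar = ∫ y, g y ∂(μstar.bind (P t)) :=
    (integral_bind_eq μstar (measurable_P hP t) (hP.prob t ht) hg hb).symm
  have h2 : μstar.bind (P t) = μstar := hinv t ht
  rw [h1, h2, hmean]

lemma funAct_decay {P : ℝ → X → Measure X} (hP : IsMarkovSemigroup P) {γ : ℝ}
    (hA2 : CondA2 P) (hA3 : CondA3 P γ)
    (μstar : Measure X) [IsProbabilityMeasure μstar]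
    (hinv : ∀ t, 0 ≤ t → measAct P t μstar = μstar)
    {g : X → ℝ} {K : ℝ≥0} (hLip : LipschitzWith K g) {C : ℝ} (hb : ∀ z, |g z| ≤ C)
    (hmean : ∫ x, g x ∂μstar = 0) (x₀ x : X) (t : ℝ) (ht : 0 ≤ t) :
    |funAct P t g x| ≤ (K : ℝ) * Real.exp (-γ * t) * (dist x₀ x + ∫ y, dist x₀ y ∂μstar) := by
  have hm_int : Integrable (fun y => dist x₀ y) μstar :=
    ffm_invariant hP hA2 hA3 μstar hinv x₀
  set m : ℝ := ∫ y, dist x₀ y ∂μstar with hm_def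
  have hfa := hA2 g hLip.continuous ⟨C, hb⟩ t ht
  obtain ⟨C', hC'⟩ := hfa.2
  have hfa_int : Integrable (funAct P t g) μstar :=
    integrable_of_bound μstar hfa.1.aestronglyMeasurable C' hC'
  have hzero := funAct_mean_zero hP μstar hinv hLip.continuous.measurable hb hmean t ht
  have h1 : funAct P t g x = ∫ y, (funAct P t g x - funAct P t g y) ∂μstar := by
    rw [integral_sub (integrable_const _) hfa_int, hzero, integral_const]
    simp
  have h2 : |funAct P t g x| ≤ ∫ y, |funAct P t g x - funAct P t g y| ∂μstar := by
    have h2a : |funAct P t g x| = |∫ y, (funAct P t g x - funAct P t g y) ∂μstar| :=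
      congrArg abs h1
    rw [h2a]
    simpa [Real.norm_eq_abs] using norm_integral_le_integral_norm
      (μ := μstar) (f := fun y => funAct P t g x - funAct P t g y)
  have h3 : ∫ y, |funAct P t g x - funAct P t g y| ∂μstar
      ≤ ∫ y, (K : ℝ) * Real.exp (-γ * t) * (dist x₀ x + dist x₀ y) ∂μstar := by
    refine integral_mono ((integrable_const _).sub hfa_int).abs ?_ fun y => ?_
    · exact (((integrable_const (dist x₀ x)).add hm_int).const_mul _)
    · calc |funAct P t g x - funAct P t g y|
          ≤ (K : ℝ) * Real.exp (-γ * t) * dist x y := funAct_dist_le hP hA3 hLip t ht x y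
        _ ≤ (K : ℝ) * Real.exp (-γ * t) * (dist x₀ x + dist x₀ y) := by
            refine mul_le_mul_of_nonneg_left ?_ (by positivity)
            calc dist x y ≤ dist x x₀ + dist x₀ y := dist_triangle _ _ _
              _ = dist x₀ x + dist x₀ y := by rw [dist_comm x x₀]
  have h4 : ∫ y, (K : ℝ) * Real.exp (-γ * t) * (dist x₀ x + dist x₀ y) ∂μstar
      = (K : ℝ) * Real.exp (-γ * t) * (dist x₀ x + m) := by
    rw [integral_const_mul, integral_add (integrable_const _) hm_int, integral_const]
    simp [hm_def]
  linarith [h2, h3.trans_eq h4]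

lemma corrector_abs_le {P : ℝ → X → Measure X} (hP : IsMarkovSemigroup P) {γ : ℝ}
    (hγ : 0 < γ) (hA2 : CondA2 P) (hA3 : CondA3 P γ)
    (μstar : Measure X) [IsProbabilityMeasure μstar]
    (hinv : ∀ t, 0 ≤ t → measAct P t μstar = μstar)
    {g : X → ℝ} {K : ℝ≥0} (hLip : LipschitzWith K g) {C : ℝ} (hb : ∀ z, |g z| ≤ C)
    (hmean : ∫ x, g x ∂μstar = 0) (x₀ x : X) :
    |corrector P g x| ≤ ((K : ℝ) * (dist x₀ x + ∫ y, dist x₀ y ∂μstar))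
      * ∫ t in Set.Ioi (0 : ℝ), Real.exp (-γ * t) := by
  set m : ℝ := ∫ y, dist x₀ y ∂μstar with hm_def
  have hm0 : 0 ≤ m := integral_nonneg fun y => dist_nonneg
  have hd0 : 0 ≤ dist x₀ x + m := by positivity
  have hEint : IntegrableOn (fun t => Real.exp (-γ * t)) (Set.Ioi (0:ℝ)) :=
    exp_neg_integrableOn_Ioi 0 hγ
  -- measurability in t
  have hgm : Measurable g := hLip.continuous.measurable
  have hfm : Measurable fun y => ENNReal.ofReal (g y) := ENNReal.measurable_ofReal.comp hgm
  have hfm' : Measurable fun y => ENNReal.ofReal (-g y) := ENNReal.measurable_ofReal.comp hgm.neg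
  have hmP' : Measurable fun t : ℝ => P (max t 0) x :=
    Measure.measurable_of_measurable_coe _ fun A hA =>
      (hP.jointMeas A hA).comp ((measurable_id.max measurable_const).prodMk measurable_const)
  set D : ℝ → ℝ := fun t => (∫⁻ y, ENNReal.ofReal (g y) ∂(P (max t 0) x)).toReal
      - (∫⁻ y, ENNReal.ofReal (-g y) ∂(P (max t 0) x)).toReal with hD_def
  have hDm : Measurable D :=
    (((Measure.measurable_lintegral hfm).comp hmP').ennreal_toReal).sub
      (((Measure.measurable_lintegral hfm').comp hmP').ennreal_toReal)
  have heq : ∀ t ∈ Set.Ioi (0:ℝ), funAct P t g x = D t := by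
    intro t ht
    haveI := hP.prob t (le_of_lt ht) x
    have hgi : Integrable g (P t x) := integrable_of_bound _ hgm.aestronglyMeasurable C hb
    have h1 := integral_eq_lintegral_pos_part_sub_lintegral_neg_part hgi
    rw [hD_def]
    simp only [max_eq_left (le_of_lt (Set.mem_Ioi.mp ht))]
    exact h1
  have hAESM : AEStronglyMeasurable (fun t => funAct P t g x)
      ((volume : Measure ℝ).restrict (Set.Ioi 0)) := by
    refine hDm.aestronglyMeasurable.congr ?_
    refine (ae_restrict_iff' measurableSet_Ioi).mpr (Filter.Eventually.of_forall fun t ht => ?_)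
    exact (heq t ht).symm
  have hbd : ∀ᵐ t ∂((volume : Measure ℝ).restrict (Set.Ioi 0)),
      ‖funAct P t g x‖ ≤ ((K : ℝ) * (dist x₀ x + m)) * Real.exp (-γ * t) := by
    refine (ae_restrict_iff' measurableSet_Ioi).mpr (Filter.Eventually.of_forall fun t ht => ?_)
    have := funAct_decay hP hA2 hA3 μstar hinv hLip hb hmean x₀ x t (le_of_lt ht)
    rw [Real.norm_eq_abs]
    calc |funAct P t g x| ≤ (K : ℝ) * Real.exp (-γ * t) * (dist x₀ x + m) := this
      _ = ((K : ℝ) * (dist x₀ x + m)) * Real.exp (-γ * t) := by ring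
  have hInt : IntegrableOn (fun t => funAct P t g x) (Set.Ioi (0:ℝ)) :=
    Integrable.mono' (hEint.const_mul ((K : ℝ) * (dist x₀ x + m))) hAESM hbd
  calc |corrector P g x| ≤ ∫ t in Set.Ioi (0:ℝ), ‖funAct P t g x‖ := by
        simpa [corrector, Real.norm_eq_abs] using norm_integral_le_integral_norm
          (μ := (volume : Measure ℝ).restrict (Set.Ioi 0)) (f := fun t => funAct P t g x)
    _ ≤ ∫ t in Set.Ioi (0:ℝ), ((K : ℝ) * (dist x₀ x + m)) * Real.exp (-γ * t) := by
        refine integral_mono_ae hInt.norm (hEint.const_mul _) hbd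
    _ = ((K : ℝ) * (dist x₀ x + m)) * ∫ t in Set.Ioi (0 : ℝ), Real.exp (-γ * t) :=
        integral_const_mul _ _

end Aux4
section Aux5
set_option linter.unusedSectionVars false
set_option maxHeartbeats 1000000

variable {X : Type*} [MetricSpace X] [CompleteSpace X] [SecondCountableTopology X]
  [MeasurableSpace X] [BorelSpace X] {Ω : Type*} [MeasurableSpace Ω]

lemma dist_eventually_le {P : ℝ → X → Measure X} (hP : IsMarkovSemigroup P)
    {ζ : ℝ} {x₀ : X} {μ : Measure X} [IsProbabilityMeasure μ] (hA4 : CondA4 P μ x₀ ζ)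
    (ℙμ : Measure Ω) [IsProbabilityMeasure ℙμ] (Φ : ℝ → Ω → X)
    (hΦ : IsMarkovProcess P Φ ℙμ μ) :
    ∀ᵐ ω ∂ℙμ, ∀ᶠ n : ℕ in atTop, dist x₀ (Φ (n : ℝ) ω) ≤ Real.sqrt (n : ℝ) := by
  have hζ2 : 2 < ζ := hA4.1
  have hζ0 : 0 < ζ := by linarith
  obtain ⟨M, hM⟩ := hA4.2
  have hM' : ∀ t, 0 ≤ t →
      (∫⁻ x, ENNReal.ofReal (dist x₀ x ^ ζ) ∂(measAct P t μ)) ≤ ENNReal.ofReal |M| :=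
    fun t ht => (hM t ht).trans (ENNReal.ofReal_le_ofReal (le_abs_self M))
  have hmeasΦ : ∀ t : ℝ, Measurable (Φ t) := fun t =>
    hΦ.jointMeas.comp (measurable_const.prodMk measurable_id)
  set q : ℕ → ℝ := fun n => ((n : ℝ) + 1) ^ (ζ / 2) with hq_def
  have hq_pos : ∀ n, 0 < q n := fun n =>
    Real.rpow_pos_of_pos (by positivity) _
  set s : ℕ → Set Ω := fun n =>
    {ω | Real.sqrt ((n : ℝ) + 1) < dist x₀ (Φ ((n : ℝ) + 1) ω)} with hs_def
  have hA : ∀ n : ℕ, MeasurableSet {x : X | Real.sqrt ((n : ℝ) + 1) < dist x₀ x} := fun n =>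
    measurableSet_lt measurable_const (measurable_const.dist measurable_id)
  have hlaw : ∀ n : ℕ, ℙμ (s n)
      = (measAct P ((n : ℝ) + 1) μ) {x : X | Real.sqrt ((n : ℝ) + 1) < dist x₀ x} := by
    intro n
    have h1 : s n = Φ ((n : ℝ) + 1) ⁻¹' {x : X | Real.sqrt ((n : ℝ) + 1) < dist x₀ x} := rfl
    rw [h1, ← Measure.map_apply (hmeasΦ _) (hA n), hΦ.law _ (by positivity)]
  have hmono : ∀ n : ℕ, {x : X | Real.sqrt ((n : ℝ) + 1) < dist x₀ x}
      ⊆ {x : X | ENNReal.ofReal (q n) ≤ ENNReal.ofReal (dist x₀ x ^ ζ)} := by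
    intro n x hx
    simp only [Set.mem_setOf_eq] at hx ⊢
    refine ENNReal.ofReal_le_ofReal ?_
    have h1 : Real.sqrt ((n : ℝ) + 1) ^ ζ ≤ dist x₀ x ^ ζ :=
      Real.rpow_le_rpow (Real.sqrt_nonneg _) hx.le hζ0.le
    have h2 : Real.sqrt ((n : ℝ) + 1) ^ ζ = q n := by
      rw [Real.sqrt_eq_rpow, ← Real.rpow_mul (by positivity), hq_def]
      congr 1
      ring
    rw [← h2]; exact h1
  have hbound : ∀ n : ℕ, ℙμ (s n) ≤ ENNReal.ofReal (|M| / q n) := by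
    intro n
    have hf_meas : AEMeasurable (fun x : X => ENNReal.ofReal (dist x₀ x ^ ζ))
        (measAct P ((n : ℝ) + 1) μ) :=
      (ENNReal.measurable_ofReal.comp
        ((Real.continuous_rpow_const hζ0.le).measurable.comp
          (measurable_const.dist measurable_id))).aemeasurable
    have h1 := mul_meas_ge_le_lintegral₀ hf_meas (ENNReal.ofReal (q n))
    have h2 : ℙμ (s n) ≤ (measAct P ((n : ℝ) + 1) μ)
        {x : X | ENNReal.ofReal (q n) ≤ ENNReal.ofReal (dist x₀ x ^ ζ)} := by
      rw [hlaw n]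
      exact measure_mono (hmono n)
    have h3 : ENNReal.ofReal (q n) * ℙμ (s n) ≤ ENNReal.ofReal |M| :=
      le_trans (mul_le_mul_right h2 _) (h1.trans (hM' _ (by positivity)))
    have h4 : ℙμ (s n) ≤ ENNReal.ofReal |M| / ENNReal.ofReal (q n) := by
      rw [ENNReal.le_div_iff_mul_le (Or.inl (by simp [ENNReal.ofReal_eq_zero, not_le, hq_pos n]))
        (Or.inl ENNReal.ofReal_ne_top)]
      rwa [mul_comm]
    rwa [← ENNReal.ofReal_div_of_pos (hq_pos n)] at h4
  have hsummable : Summable (fun n : ℕ => |M| / q n) := by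
    have hbase : Summable (fun n : ℕ => 1 / (n : ℝ) ^ (ζ / 2)) :=
      Real.summable_one_div_nat_rpow.mpr (by linarith)
    have hshift : Summable (fun n : ℕ => 1 / ((n : ℝ) + 1) ^ (ζ / 2)) := by
      have := (summable_nat_add_iff (f := fun n : ℕ => 1 / (n : ℝ) ^ (ζ / 2)) 1).mpr hbase
      simpa [Nat.cast_add] using this
    have := hshift.mul_left |M|
    refine this.congr fun n => ?_
    rw [hq_def, mul_one_div]
  have htsum : (∑' n, ℙμ (s n)) ≠ ⊤ := by
    have h1 : (∑' n, ℙμ (s n)) ≤ ∑' n, ENNReal.ofReal (|M| / q n) :=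
      ENNReal.tsum_le_tsum hbound
    have h2 : (∑' n, ENNReal.ofReal (|M| / q n)) = ENNReal.ofReal (∑' n, |M| / q n) :=
      (ENNReal.ofReal_tsum_of_nonneg
        (fun n => div_nonneg (abs_nonneg M) (hq_pos n).le) hsummable).symm
    rw [h2] at h1
    exact ne_top_of_le_ne_top ENNReal.ofReal_ne_top h1
  have hae := ae_eventually_notMem htsum
  filter_upwards [hae] with ω hω
  rw [Filter.eventually_atTop] at hω ⊢
  obtain ⟨N, hN⟩ := hω
  refine ⟨N + 1, fun n hn => ?_⟩
  obtain ⟨k, rfl⟩ : ∃ k, n = k + 1 := ⟨n - 1, by omega⟩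
  have h1 := hN k (by omega)
  rw [hs_def] at h1
  simp only [Set.mem_setOf_eq, not_lt] at h1
  have hc : ((k + 1 : ℕ) : ℝ) = (k : ℝ) + 1 := by push_cast; ring
  rw [hc]
  exact h1

end Aux5
/-- Lemma 2. Under (A2)–(A4), the sequence
`R_n(g) = (χ_g(Φ_0) - χ_g(Φ_n))/√(2 n ln ln n)` converges to `0` `ℙ_μ`-a.s. -/
theorem remainder_tendsto_zero
    (P : ℝ → X → Measure X) (hP : IsMarkovSemigroup P)
    (γ ζ : ℝ) (x₀ : X) (μ μstar : Measure X)
    [IsProbabilityMeasure μ] [IsProbabilityMeasure μstar]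
    (hA2 : CondA2 P) (hA3 : CondA3 P γ) (hA4 : CondA4 P μ x₀ ζ)
    (hinv : ∀ t, 0 ≤ t → measAct P t μstar = μstar)
    (g : X → ℝ) (K : ℝ≥0) (hLip : LipschitzWith K g) (hBd : ∃ C, ∀ x, |g x| ≤ C)
    (hmean : ∫ x, g x ∂μstar = 0)
    (ℙμ : Measure Ω) [IsProbabilityMeasure ℙμ]
    (Φ : ℝ → Ω → X) (hΦ : IsMarkovProcess P Φ ℙμ μ) :
    ∀ᵐ ω ∂ℙμ,
      Tendsto (fun n : ℕ =>
          (corrector P g (Φ 0 ω) - corrector P g (Φ (n : ℝ) ω)) /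
            Real.sqrt (2 * (n : ℝ) * Real.log (Real.log (n : ℝ))))
        atTop (𝓝 0) := by
  obtain ⟨C, hb⟩ := hBd
  have hγ : 0 < γ := hA3.2.1
  set m : ℝ := ∫ y, dist x₀ y ∂μstar with hm_def
  have hm0 : 0 ≤ m := integral_nonneg fun y => dist_nonneg
  set E : ℝ := ∫ t in Set.Ioi (0 : ℝ), Real.exp (-γ * t) with hE_def
  have hE0 : 0 ≤ E := setIntegral_nonneg measurableSet_Ioi fun t _ => (Real.exp_pos _).le
  have hcorr : ∀ x : X, |corrector P g x| ≤ ((K : ℝ) * (dist x₀ x + m)) * E := fun x =>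
    corrector_abs_le hP hγ hA2 hA3 μstar hinv hLip hb hmean x₀ x
  have hae := dist_eventually_le hP hA4 ℙμ Φ hΦ
  filter_upwards [hae] with ω hω
  set χ₀ : ℝ := corrector P g (Φ 0 ω) with hχ₀
  set c₁ : ℝ := |χ₀| + (K : ℝ) * E * m with hc1
  have hc10 : 0 ≤ c₁ := by positivity
  set C₃ : ℝ := c₁ + (K : ℝ) * E with hC3
  have hC₃0 : 0 ≤ C₃ := by positivity
  -- the majorant tends to zero
  have hLL : Tendsto (fun n : ℕ => Real.sqrt (2 * Real.log (Real.log (n : ℝ))))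
      atTop atTop := by
    have hs : Tendsto Real.sqrt atTop atTop := by
      have : Real.sqrt = fun x : ℝ => x ^ (1 / (2:ℝ)) := funext Real.sqrt_eq_rpow
      rw [this]
      exact tendsto_rpow_atTop (by norm_num)
    apply hs.comp
    apply Tendsto.const_mul_atTop (by norm_num : (0:ℝ) < 2)
    exact Real.tendsto_log_atTop.comp (Real.tendsto_log_atTop.comp tendsto_natCast_atTop_atTop)
  have hmaj : Tendsto (fun n : ℕ => C₃ / Real.sqrt (2 * Real.log (Real.log (n : ℝ))))
      atTop (𝓝 0) := Tendsto.div_atTop tendsto_const_nhds hLL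
  refine squeeze_zero_norm' ?_ hmaj
  filter_upwards [hω, eventually_ge_atTop 3] with n hdist h3
  have hn3 : (3 : ℝ) ≤ (n : ℝ) := by exact_mod_cast h3
  have hn0 : (0 : ℝ) < (n : ℝ) := by linarith
  have hn1 : (1 : ℝ) ≤ (n : ℝ) := by linarith
  set L : ℝ := Real.log (Real.log (n : ℝ)) with hL
  have hlog1 : 1 < Real.log (n : ℝ) := by
    rw [← Real.exp_lt_exp, Real.exp_log hn0]
    calc Real.exp 1 < 2.7182818286 := Real.exp_one_lt_d9
      _ ≤ (n : ℝ) := by linarith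
  have hLpos : 0 < L := Real.log_pos hlog1
  have hsn : 0 < Real.sqrt (n : ℝ) := Real.sqrt_pos.mpr hn0
  have hsn1 : 1 ≤ Real.sqrt (n : ℝ) := Real.one_le_sqrt.mpr hn1
  have hsL : 0 < Real.sqrt (2 * L) := Real.sqrt_pos.mpr (by linarith)
  have hsq : Real.sqrt (2 * (n : ℝ) * L) = Real.sqrt (n : ℝ) * Real.sqrt (2 * L) := by
    rw [show 2 * (n : ℝ) * L = (n : ℝ) * (2 * L) by ring,
      Real.sqrt_mul (le_of_lt hn0)]
  -- bound on the numerator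
  have hb1 : |corrector P g (Φ (n : ℝ) ω)| ≤ (K : ℝ) * E * m + (K : ℝ) * E * Real.sqrt n := by
    have h1 := hcorr (Φ (n : ℝ) ω)
    have h2 : ((K : ℝ) * (dist x₀ (Φ (n : ℝ) ω) + m)) * E
        ≤ ((K : ℝ) * (Real.sqrt n + m)) * E := by
      refine mul_le_mul_of_nonneg_right ?_ hE0
      refine mul_le_mul_of_nonneg_left ?_ K.coe_nonneg
      linarith [hdist]
    calc |corrector P g (Φ (n : ℝ) ω)| ≤ ((K : ℝ) * (dist x₀ (Φ (n : ℝ) ω) + m)) * E := h1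
      _ ≤ ((K : ℝ) * (Real.sqrt n + m)) * E := h2
      _ = (K : ℝ) * E * m + (K : ℝ) * E * Real.sqrt n := by ring
  have hnum : |χ₀ - corrector P g (Φ (n : ℝ) ω)| ≤ C₃ * Real.sqrt n := by
    have h5 : c₁ ≤ c₁ * Real.sqrt n := le_mul_of_one_le_right hc10 hsn1
    have hKE : (0:ℝ) ≤ (K : ℝ) * E := by positivity
    calc |χ₀ - corrector P g (Φ (n : ℝ) ω)|
        ≤ |χ₀| + |corrector P g (Φ (n : ℝ) ω)| := abs_sub _ _
      _ ≤ |χ₀| + ((K : ℝ) * E * m + (K : ℝ) * E * Real.sqrt n) := by linarith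
      _ = c₁ + (K : ℝ) * E * Real.sqrt n := by rw [hc1]; ring
      _ ≤ c₁ * Real.sqrt n + (K : ℝ) * E * Real.sqrt n := by linarith
      _ = C₃ * Real.sqrt n := by rw [hC3]; ring
  -- put it together
  rw [Real.norm_eq_abs, abs_div, abs_of_nonneg (Real.sqrt_nonneg _), hsq]
  calc |χ₀ - corrector P g (Φ (n : ℝ) ω)| / (Real.sqrt (n : ℝ) * Real.sqrt (2 * L))
      ≤ (C₃ * Real.sqrt (n : ℝ)) / (Real.sqrt (n : ℝ) * Real.sqrt (2 * L)) :=
        (div_le_div_iff_of_pos_right (mul_pos hsn hsL)).mpr hnum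
    _ = C₃ / Real.sqrt (2 * L) := by
        rw [mul_comm (Real.sqrt (n : ℝ)) (Real.sqrt (2 * L))]
        exact mul_div_mul_right _ _ (ne_of_gt hsn)

end
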